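/- arXiv:math/9201237 — 2 statements merged into one kernel-verified Lean document; each statement's English description precedes it below -/
import Mathlib

section
/- The weak L^p norm satisfies an upper p-estimate with constant 1: if f_1, …, f_N ∈ L^{p,∞}(Ω,Σ,μ) have pairwise disjoint supports (i.e., for i ≠ j, f_i·f_j = 0 almost everywhere), then ‖f_1 + ⋯ + f_N‖ ≤ (‖f_1‖^p + ⋯ + ‖f_N‖^p)^{1/p}. -/
open MeasureTheory Set ENNReal

/-- The weak `L^p` "norm": `sup { (∫_B |f| dμ) / μ(B)^(1/q) }` over measurable `B`
with `0 < μ B < ∞`, computed in `ℝ≥0∞`. -/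
noncomputable def wnorm {α : Type*} [MeasurableSpace α] (q : ℝ) (μ : Measure α)
    (f : α → ℝ) : ℝ≥0∞ :=
  ⨆ (B : Set α) (_ : MeasurableSet B ∧ 0 < μ B ∧ μ B < ⊤),
    (∫⁻ x in B, ENNReal.ofReal |f x| ∂μ) / μ B ^ (1 / q)

/-- The set `{f ≠ 0}` is σ-finite for `μ`. -/
def SigmaFinSupp {α : Type*} [MeasurableSpace α] (μ : Measure α) (f : α → ℝ) : Prop :=
  ∃ s : ℕ → Set α, {x | f x ≠ 0} ⊆ (⋃ n, s n) ∧ ∀ n, μ (s n) < ⊤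

/-- Membership in the weak `L^p` space. -/
def MemW {α : Type*} [MeasurableSpace α] (q : ℝ) (μ : Measure α) (f : α → ℝ) : Prop :=
  Measurable f ∧ SigmaFinSupp μ f ∧ wnorm q μ f < ⊤


/-- The weak `L^p` norm satisfies an upper `p`-estimate with constant `1`: for
`f_1, …, f_N` in the weak `L^p` space with pairwise disjoint supports,
`‖f_1 + ⋯ + f_N‖ ≤ (‖f_1‖^p + ⋯ + ‖f_N‖^p)^{1/p}`. -/
theorem wnorm_upper_p_estimate (p q : ℝ) (hp : 1 < p) (hq : q = p / (p - 1))
    {α : Type*} [MeasurableSpace α] (μ : Measure α) (N : ℕ) (f : Fin N → (α → ℝ))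
    (hf : ∀ i, MemW q μ (f i))
    (hdisj : ∀ i j, i ≠ j → ∀ᵐ x ∂μ, f i x * f j x = 0) :
    wnorm q μ (∑ i, f i) ≤ (∑ i, wnorm q μ (f i) ^ p) ^ (1 / p) := by
  have hpq : p.HolderConjugate q := by
    rw [hq]; exact Real.HolderConjugate.conjExponent hp
  have hq0 : 0 < q := hpq.symm.pos
  have hq0' : 0 < 1 / q := by positivity
  refine iSup_le fun B => iSup_le fun hB => ?_
  obtain ⟨hBm, hB0, hBt⟩ := hB
  set s : Fin N → Set α := fun i => B ∩ {x | f i x ≠ 0} with hs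
  have hsuppm : ∀ i, MeasurableSet {x | f i x ≠ 0} := fun i =>
    (hf i).1 (measurableSet_singleton (0 : ℝ)).compl
  have hsm : ∀ i, MeasurableSet (s i) := fun i => hBm.inter (hsuppm i)
  -- Step 1: triangle inequality and restriction to the supports
  have h1 : (∫⁻ x in B, ENNReal.ofReal |(∑ i, f i) x| ∂μ)
      ≤ ∑ i, ∫⁻ x in s i, ENNReal.ofReal |f i x| ∂μ := by
    have hptw : ∀ x, ENNReal.ofReal |(∑ i, f i) x| ≤ ∑ i, ENNReal.ofReal |f i x| := by
      intro x
      calc ENNReal.ofReal |(∑ i, f i) x| ≤ ENNReal.ofReal (∑ i, |f i x|) := by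
            apply ENNReal.ofReal_le_ofReal
            simpa using Finset.abs_sum_le_sum_abs (fun i => f i x) Finset.univ
        _ = ∑ i, ENNReal.ofReal |f i x| :=
            ENNReal.ofReal_sum_of_nonneg (fun i _ => abs_nonneg _)
    calc (∫⁻ x in B, ENNReal.ofReal |(∑ i, f i) x| ∂μ)
        ≤ ∫⁻ x in B, ∑ i, ENNReal.ofReal |f i x| ∂μ := lintegral_mono fun x => hptw x
      _ = ∑ i, ∫⁻ x in B, ENNReal.ofReal |f i x| ∂μ :=
          lintegral_finset_sum _ fun i _ => ((hf i).1.abs.ennreal_ofReal)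
      _ = ∑ i, ∫⁻ x in s i, ENNReal.ofReal |f i x| ∂μ := by
          refine Finset.sum_congr rfl fun i _ => ?_
          rw [← lintegral_inter_add_diff (fun x => ENNReal.ofReal |f i x|) B (hsuppm i)]
          have : (∫⁻ x in B \ {x | f i x ≠ 0}, ENNReal.ofReal |f i x| ∂μ) = 0 := by
            rw [setLIntegral_congr_fun_ae (hBm.diff (hsuppm i))
              (Filter.Eventually.of_forall (fun x hx => ?_)), lintegral_zero]
            have : f i x = 0 := by simpa using hx.2
            simp [this]
          simp [this, hs]
  -- Step 2: bound each integral by the weak norm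
  have h2 : ∀ i, (∫⁻ x in s i, ENNReal.ofReal |f i x| ∂μ)
      ≤ wnorm q μ (f i) * μ (s i) ^ (1 / q) := by
    intro i
    rcases eq_or_lt_of_le (zero_le : 0 ≤ μ (s i)) with h0 | h0
    · rw [Measure.restrict_eq_zero.mpr h0.symm]
      simp
    · have hlt : μ (s i) < ⊤ := lt_of_le_of_lt (measure_mono inter_subset_left) hBt
      have hle : (∫⁻ x in s i, ENNReal.ofReal |f i x| ∂μ) / μ (s i) ^ (1 / q)
          ≤ wnorm q μ (f i) :=
        le_iSup_of_le (s i) (le_iSup_of_le ⟨hsm i, h0, hlt⟩ le_rfl)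
      have hc0 : μ (s i) ^ (1 / q) ≠ 0 := by
        simp [ENNReal.rpow_eq_zero_iff, h0.ne', hq0'.ne', hq0', hlt.ne]
      have hct : μ (s i) ^ (1 / q) ≠ ⊤ := by
        simp [ENNReal.rpow_eq_top_iff, h0.ne', hq0'.ne', hq0'.not_gt, hlt.ne]
      calc (∫⁻ x in s i, ENNReal.ofReal |f i x| ∂μ)
          = (∫⁻ x in s i, ENNReal.ofReal |f i x| ∂μ) / μ (s i) ^ (1 / q)
            * μ (s i) ^ (1 / q) := by
            rw [ENNReal.div_mul_cancel hc0 hct]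
        _ ≤ wnorm q μ (f i) * μ (s i) ^ (1 / q) := mul_le_mul_left hle _
  -- Step 3: sum of measures of the (a.e. disjoint) pieces is at most `μ B`
  have h3 : (∑ i, μ (s i)) ≤ μ B := by
    have hdisj' : Pairwise (Function.onFun (MeasureTheory.AEDisjoint μ) s) := by
      intro i j hij
      have := (ae_iff.mp (hdisj i j hij))
      refine measure_mono_null (fun x hx => ?_) this
      exact mul_ne_zero hx.1.2 hx.2.2
    have := measure_iUnion₀ hdisj' (fun i => (hsm i).nullMeasurableSet)
    rw [tsum_fintype] at this
    rw [← this]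
    exact measure_mono (iUnion_subset fun i => inter_subset_left)
  -- Step 4: Hölder's inequality
  have h4 : (∑ i, wnorm q μ (f i) * μ (s i) ^ (1 / q))
      ≤ (∑ i, wnorm q μ (f i) ^ p) ^ (1 / p) * μ B ^ (1 / q) := by
    calc (∑ i, wnorm q μ (f i) * μ (s i) ^ (1 / q))
        ≤ (∑ i, wnorm q μ (f i) ^ p) ^ (1 / p)
          * (∑ i, (μ (s i) ^ (1 / q)) ^ q) ^ (1 / q) :=
          ENNReal.inner_le_Lp_mul_Lq Finset.univ _ _ hpq
      _ = (∑ i, wnorm q μ (f i) ^ p) ^ (1 / p) * (∑ i, μ (s i)) ^ (1 / q) := by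
          congr 1
          congr 1
          refine Finset.sum_congr rfl fun i _ => ?_
          rw [← ENNReal.rpow_mul, one_div_mul_cancel hq0.ne', ENNReal.rpow_one]
      _ ≤ (∑ i, wnorm q μ (f i) ^ p) ^ (1 / p) * μ B ^ (1 / q) :=
          mul_le_mul_right (ENNReal.rpow_le_rpow h3 hq0'.le) _
  -- Combine
  have hc0 : μ B ^ (1 / q) ≠ 0 := by
    simp [ENNReal.rpow_eq_zero_iff, hB0.ne', hq0'.ne', hq0', hBt.ne]
  have hct : μ B ^ (1 / q) ≠ ⊤ := by
    simp [ENNReal.rpow_eq_top_iff, hB0.ne', hq0'.ne', hq0'.not_gt, hBt.ne]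
  rw [ENNReal.div_le_iff hc0 hct]
  exact h1.trans ((Finset.sum_le_sum fun i _ => h2 i).trans h4)
end

section
/- For all integers j ≥ 1 and r ≥ 0, ∑_{l=0}^{r} ((j-1)(r+1) + l + 1)^{-1/p} ≤ q (r+1)^{1/q} (j^{1/q} − (j−1)^{1/q}). -/
open Real in
lemma aux_rpow_step {a α : ℝ} (ha : 0 ≤ a) (hα0 : 0 ≤ α) (hα1 : α ≤ 1) :
    a ^ α ≤ (a + 1) ^ α - α * (a + 1) ^ (α - 1) := by
  have hb : (0:ℝ) < a + 1 := by linarith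
  have hb1 : (1:ℝ) ≤ a + 1 := by linarith
  have hs : -1 ≤ -(1 / (a + 1)) := by
    rw [neg_le_neg_iff]
    exact div_le_one_of_le₀ hb1 hb.le
  have hbern := rpow_one_add_le_one_add_mul_self hs hα0 hα1
  have key : a ^ α ≤ (a + 1) ^ α * (1 + α * -(1 / (a + 1))) := by
    have h1 : (1 + -(1 / (a + 1))) = a / (a + 1) := by field_simp; ring
    have h2 : a = (a + 1) * (a / (a + 1)) := by field_simp
    calc a ^ α = ((a + 1) * (a / (a + 1))) ^ α := by rw [← h2]
      _ = (a + 1) ^ α * (a / (a + 1)) ^ α := by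
          rw [mul_rpow hb.le (by positivity)]
      _ ≤ (a + 1) ^ α * (1 + α * -(1 / (a + 1))) := by
          apply mul_le_mul_of_nonneg_left _ (rpow_nonneg hb.le α)
          rw [← h1]; exact hbern
  calc a ^ α ≤ (a + 1) ^ α * (1 + α * -(1 / (a + 1))) := key
    _ = (a + 1) ^ α - α * ((a + 1) ^ α * (a + 1)⁻¹) := by ring_nf
    _ = (a + 1) ^ α - α * (a + 1) ^ (α - 1) := by
        rw [← rpow_neg_one (a + 1), ← rpow_add hb]; ring_nf

/-- The elementary estimate used in Lemma 7 of the paper: for integers `j ≥ 1` and `r ≥ 0`,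
`∑_{l=0}^{r} ((j-1)(r+1) + l + 1)^{-1/p} ≤ q (r+1)^{1/q} (j^{1/q} - (j-1)^{1/q})`,
where `1 < p < ∞` and `q = p/(p-1)`. -/
theorem sum_rpow_neg_inv_le (p q : ℝ) (hp : 1 < p) (hq : q = p / (p - 1))
    (j : ℕ) (hj : 1 ≤ j) (r : ℕ) :
    ∑ l ∈ Finset.range (r + 1),
        (((j : ℝ) - 1) * ((r : ℝ) + 1) + (l : ℝ) + 1) ^ (-(1 / p)) ≤
      q * ((r : ℝ) + 1) ^ (1 / q) * ((j : ℝ) ^ (1 / q) - ((j : ℝ) - 1) ^ (1 / q)) := by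
  have hp0 : (0:ℝ) < p := by linarith
  have hp1 : (0:ℝ) < p - 1 := by linarith
  have hq0 : 0 < q := by rw [hq]; positivity
  set α : ℝ := 1 / q with hαdef
  have hα : α = 1 - 1 / p := by
    rw [hαdef, hq]; field_simp
  have hα0 : 0 < α := by rw [hα]; rw [sub_pos, div_lt_one hp0]; exact hp
  have hα1 : α < 1 := by
    have h01 : 0 < 1 / p := by positivity
    rw [hα]; linarith
  have hqα : q * α = 1 := by rw [hαdef]; field_simp
  have hαm1 : α - 1 = -(1 / p) := by rw [hα]; ring
  have hj1 : (1:ℝ) ≤ (j:ℝ) := by exact_mod_cast hj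
  have hrpos : (0:ℝ) < (r:ℝ) + 1 := by positivity
  -- termwise bound and telescoping
  have hterm : ∀ l ∈ Finset.range (r + 1),
      (((j : ℝ) - 1) * ((r : ℝ) + 1) + (l : ℝ) + 1) ^ (-(1 / p)) ≤
        q * ((((j : ℝ) - 1) * ((r : ℝ) + 1) + ((l : ℝ) + 1)) ^ α
          - (((j : ℝ) - 1) * ((r : ℝ) + 1) + (l : ℝ)) ^ α) := by
    intro l _
    set a : ℝ := ((j : ℝ) - 1) * ((r : ℝ) + 1) + (l : ℝ) with hadef
    have ha : 0 ≤ a := by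
      have : 0 ≤ ((j:ℝ) - 1) := by linarith
      positivity
    have hstep := aux_rpow_step ha hα0.le hα1.le
    have h2 : (a + 1) ^ (α - 1) ≤ ((a + 1) ^ α - a ^ α) / α := by
      rw [le_div_iff₀ hα0]; linarith [hstep]
    have hqinv : q = α⁻¹ := by
      field_simp [hαdef]; exact hqα
    calc (((j : ℝ) - 1) * ((r : ℝ) + 1) + (l : ℝ) + 1) ^ (-(1 / p))
        = (a + 1) ^ (α - 1) := by rw [hαm1, hadef]
      _ ≤ ((a + 1) ^ α - a ^ α) / α := h2
      _ = q * ((a + 1) ^ α - a ^ α) := by rw [hqinv, div_eq_inv_mul]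
      _ = q * ((((j : ℝ) - 1) * ((r : ℝ) + 1) + ((l : ℝ) + 1)) ^ α
          - (((j : ℝ) - 1) * ((r : ℝ) + 1) + (l : ℝ)) ^ α) := by
          rw [hadef]; ring_nf
  have hsum := Finset.sum_le_sum hterm
  have htel : ∑ l ∈ Finset.range (r + 1),
      q * ((((j : ℝ) - 1) * ((r : ℝ) + 1) + ((l : ℝ) + 1)) ^ α
          - (((j : ℝ) - 1) * ((r : ℝ) + 1) + (l : ℝ)) ^ α)
      = q * ((((j:ℝ)) * ((r:ℝ) + 1)) ^ α - (((j:ℝ) - 1) * ((r:ℝ) + 1)) ^ α) := by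
    rw [← Finset.mul_sum]
    congr 1
    have := Finset.sum_range_sub
      (fun l : ℕ => (((j : ℝ) - 1) * ((r : ℝ) + 1) + (l : ℝ)) ^ α) (r + 1)
    simp only [Nat.cast_add, Nat.cast_one, Nat.cast_zero] at this ⊢
    rw [this]
    norm_num
    ring_nf
  rw [htel] at hsum
  refine hsum.trans_eq ?_
  have hj0 : (0:ℝ) ≤ (j:ℝ) := by positivity
  have hj10 : (0:ℝ) ≤ (j:ℝ) - 1 := by linarith
  rw [Real.mul_rpow hj0 hrpos.le, Real.mul_rpow hj10 hrpos.le]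
  ring
end
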